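/- Let n ∈ ℤ and a ∈ ℚ_p with ‖a‖ = p^n. Then ∫_{‖x‖ = p^n} log‖x - a‖ dμ(x) = [(1 - 1/p) · log‖a‖ - (log p)/(p - 1)] · ‖a‖. -/

import Mathlib

open MeasureTheory

namespace PadicLogSphereAux
open ENNReal

variable {p : ℕ} [hp : Fact p.Prime]

lemma pR_one_lt : (1:ℝ) < p := by exact_mod_cast hp.out.one_lt
lemma pR_pos : (0:ℝ) < p := lt_trans one_pos pR_one_lt
lemma pQ_ne : (p : ℚ_[p]) ≠ 0 := Nat.cast_ne_zero.mpr hp.out.ne_zero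

section Meas
variable [MeasurableSpace ℚ_[p]] [BorelSpace ℚ_[p]]

lemma ball_meas (c : ℝ) : MeasurableSet {x : ℚ_[p] | ‖x‖ ≤ c} :=
  (isClosed_le continuous_norm continuous_const).measurableSet

lemma sphere_meas (c : ℝ) : MeasurableSet {x : ℚ_[p] | ‖x‖ = c} :=
  (isClosed_eq continuous_norm continuous_const).measurableSet

end Meas

/-- norm rigidity: if `p^(m-1) < ‖x‖ ≤ p^m` then `‖x‖ = p^m`. -/
lemma norm_eq_of_lt_of_le {x : ℚ_[p]} {m : ℤ} (h1 : (p:ℝ)^(m-1) < ‖x‖)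
    (h2 : ‖x‖ ≤ (p:ℝ)^m) : ‖x‖ = (p:ℝ)^m := by
  have hx : x ≠ 0 := by
    intro h; rw [h, norm_zero] at h1
    exact absurd h1 (not_lt.mpr (zpow_nonneg (le_of_lt pR_pos) _))
  rw [Padic.norm_eq_zpow_neg_valuation hx] at h1 h2 ⊢
  have e1 : m - 1 < -x.valuation := (zpow_lt_zpow_iff_right₀ pR_one_lt).mp h1
  have e2 : -x.valuation ≤ m := (zpow_le_zpow_iff_right₀ pR_one_lt).mp h2
  have : -x.valuation = m := le_antisymm e2 (by omega)
  rw [this]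

/-- coset decomposition of the ball of radius `p^(m+1)` -/
lemma ball_succ (m : ℤ) :
    {x : ℚ_[p] | ‖x‖ ≤ (p:ℝ)^(m+1)} =
      ⋃ j : Fin p, (fun x : ℚ_[p] =>
        -(((j:ℕ):ℚ_[p]) * (p:ℚ_[p])^(-(m+1))) + x) ⁻¹' {x : ℚ_[p] | ‖x‖ ≤ (p:ℝ)^m} := by
  ext x
  simp only [Set.mem_iUnion, Set.mem_preimage, Set.mem_setOf_eq]
  constructor
  · intro hx
    have hz : ‖x * (p:ℚ_[p])^((m+1):ℤ)‖ ≤ 1 := by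
      rw [norm_mul, Padic.norm_p_zpow]
      calc ‖x‖ * (p:ℝ)^(-(m+1)) ≤ (p:ℝ)^(m+1) * (p:ℝ)^(-(m+1)) :=
            mul_le_mul_of_nonneg_right hx (zpow_nonneg (le_of_lt pR_pos) _)
        _ = 1 := by rw [← zpow_add₀ (ne_of_gt pR_pos), add_neg_cancel, zpow_zero]
    set zz : ℤ_[p] := ⟨x * (p:ℚ_[p])^((m+1):ℤ), hz⟩ with hzz
    refine ⟨⟨zz.appr 1, by simpa using zz.appr_lt 1⟩, ?_⟩
    have hsub : ‖zz - (zz.appr 1 : ℤ_[p])‖ ≤ (p:ℝ)^(-1:ℤ) := by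
      have := (PadicInt.norm_le_pow_iff_mem_span_pow (zz - (zz.appr 1 : ℤ_[p])) 1).2
        (zz.appr_spec 1)
      simpa using this
    have hsub' : ‖x * (p:ℚ_[p])^((m+1):ℤ) - ((zz.appr 1 : ℕ) : ℚ_[p])‖ ≤ (p:ℝ)^(-1:ℤ) := by
      rw [PadicInt.norm_def] at hsub
      push_cast at hsub
      exact hsub
    have key : -(((zz.appr 1 : ℕ):ℚ_[p]) * (p:ℚ_[p])^(-(m+1))) + x
        = (x * (p:ℚ_[p])^((m+1):ℤ) - ((zz.appr 1 : ℕ) : ℚ_[p])) * (p:ℚ_[p])^(-(m+1)) := by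
      have hxe : x = x * (p:ℚ_[p])^((m+1):ℤ) * (p:ℚ_[p])^(-(m+1)) := by
        rw [mul_assoc, ← zpow_add₀ pQ_ne, add_neg_cancel, zpow_zero, mul_one]
      rw [sub_mul]
      nth_rewrite 1 [hxe]
      ring
    rw [key, norm_mul, Padic.norm_p_zpow, neg_neg]
    calc ‖x * (p:ℚ_[p])^((m+1):ℤ) - ((zz.appr 1 : ℕ) : ℚ_[p])‖ * (p:ℝ)^(m+1)
        ≤ (p:ℝ)^(-1:ℤ) * (p:ℝ)^(m+1) :=
          mul_le_mul_of_nonneg_right hsub' (zpow_nonneg (le_of_lt pR_pos) _)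
      _ = (p:ℝ)^m := by rw [← zpow_add₀ (ne_of_gt pR_pos)]; ring_nf
  · rintro ⟨j, hj⟩
    have hc : ‖((j:ℕ):ℚ_[p]) * (p:ℚ_[p])^(-(m+1))‖ ≤ (p:ℝ)^(m+1) := by
      rw [norm_mul, Padic.norm_p_zpow, neg_neg]
      have : ‖((j:ℕ):ℚ_[p])‖ ≤ 1 := by
        have := Padic.norm_int_le_one (p := p) (j : ℕ)
        push_cast at this; exact this
      calc ‖((j:ℕ):ℚ_[p])‖ * (p:ℝ)^(m+1) ≤ 1 * (p:ℝ)^(m+1) :=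
            mul_le_mul_of_nonneg_right this (zpow_nonneg (le_of_lt pR_pos) _)
        _ = (p:ℝ)^(m+1) := one_mul _
    have hxw : x = (-(((j:ℕ):ℚ_[p]) * (p:ℚ_[p])^(-(m+1))) + x)
        + ((j:ℕ):ℚ_[p]) * (p:ℚ_[p])^(-(m+1)) := by ring
    calc ‖x‖ ≤ max ‖-(((j:ℕ):ℚ_[p]) * (p:ℚ_[p])^(-(m+1))) + x‖
          ‖((j:ℕ):ℚ_[p]) * (p:ℚ_[p])^(-(m+1))‖ := by
          nth_rewrite 1 [hxw]; exact Padic.nonarchimedean _ _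
      _ ≤ (p:ℝ)^(m+1) := by
          apply max_le (le_trans hj ?_) hc
          exact zpow_le_zpow_right₀ (le_of_lt pR_one_lt) (by omega)


lemma coset_disj (m : ℤ) :
    Pairwise (Function.onFun Disjoint (fun j : Fin p => (fun x : ℚ_[p] =>
      -(((j:ℕ):ℚ_[p]) * (p:ℚ_[p])^(-(m+1))) + x) ⁻¹' {x : ℚ_[p] | ‖x‖ ≤ (p:ℝ)^m})) := by
  intro j j' hjj'
  rw [Function.onFun, Set.disjoint_left]
  intro x hx hx'
  simp only [Set.mem_preimage, Set.mem_setOf_eq] at hx hx'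
  have hdiff : ‖(((j:ℕ):ℚ_[p]) - ((j':ℕ):ℚ_[p])) * (p:ℚ_[p])^(-(m+1))‖ ≤ (p:ℝ)^m := by
    have e : (((j:ℕ):ℚ_[p]) - ((j':ℕ):ℚ_[p])) * (p:ℚ_[p])^(-(m+1))
        = (-(((j':ℕ):ℚ_[p]) * (p:ℚ_[p])^(-(m+1))) + x)
          - (-(((j:ℕ):ℚ_[p]) * (p:ℚ_[p])^(-(m+1))) + x) := by ring
    rw [e, sub_eq_add_neg]
    refine le_trans (Padic.nonarchimedean _ _) ?_
    rw [norm_neg]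
    exact max_le hx' hx
  have hnorm1 : ‖(((j:ℕ):ℚ_[p]) - ((j':ℕ):ℚ_[p]))‖ = 1 := by
    have hcast : (((j:ℕ):ℚ_[p]) - ((j':ℕ):ℚ_[p])) = (((j:ℕ) - (j':ℕ) : ℤ) : ℚ_[p]) := by
      push_cast; ring
    rw [hcast]
    have hne : ((j:ℕ) : ℤ) - ((j':ℕ) : ℤ) ≠ 0 := by
      intro h; apply hjj'; apply Fin.ext; omega
    have hnd : ¬ ((p:ℤ) ∣ ((j:ℕ) : ℤ) - ((j':ℕ) : ℤ)) := by
      intro h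
      have hb1 : ((j:ℕ) : ℤ) < p := by exact_mod_cast j.2
      have hb2 : ((j':ℕ) : ℤ) < p := by exact_mod_cast j'.2
      have habs : |((j:ℕ) : ℤ) - ((j':ℕ) : ℤ)| < p := by rw [abs_lt]; omega
      exact hne (Int.eq_zero_of_abs_lt_dvd h habs)
    have h1 : ¬ ‖((((j:ℕ) : ℤ) - ((j':ℕ) : ℤ) : ℤ) : ℚ_[p])‖ < 1 := by
      rw [Padic.norm_intCast_lt_one_iff]; exact_mod_cast hnd
    have h2 : ‖((((j:ℕ) : ℤ) - ((j':ℕ) : ℤ) : ℤ) : ℚ_[p])‖ ≤ 1 :=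
      Padic.norm_int_le_one _
    exact le_antisymm h2 (not_lt.mp h1)
  rw [norm_mul, hnorm1, one_mul, Padic.norm_p_zpow, neg_neg] at hdiff
  have : (p:ℝ)^m < (p:ℝ)^(m+1) := zpow_lt_zpow_right₀ pR_one_lt (by omega)
  linarith


section MeasureBall
variable [MeasurableSpace ℚ_[p]] [BorelSpace ℚ_[p]] (μ : Measure ℚ_[p]) [μ.IsAddHaarMeasure]

lemma measure_ball_succ (m : ℤ) :
    μ {x : ℚ_[p] | ‖x‖ ≤ (p:ℝ)^(m+1)} = p * μ {x : ℚ_[p] | ‖x‖ ≤ (p:ℝ)^m} := by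
  rw [ball_succ (p := p) m,
    measure_iUnion (coset_disj m)
      (fun j => (ball_meas _).preimage (measurable_const_add _))]
  have : ∀ j : Fin p, μ ((fun x : ℚ_[p] =>
      -(((j:ℕ):ℚ_[p]) * (p:ℚ_[p])^(-(m+1))) + x) ⁻¹' {x : ℚ_[p] | ‖x‖ ≤ (p:ℝ)^m})
      = μ {x : ℚ_[p] | ‖x‖ ≤ (p:ℝ)^m} := fun j => measure_preimage_add μ _ _
  rw [tsum_congr this, tsum_fintype]
  simp [Finset.sum_const, Finset.card_univ, mul_comm]

lemma measure_ball (hμ : μ {x : ℚ_[p] | ‖x‖ ≤ 1} = 1) (m : ℤ) :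
    μ {x : ℚ_[p] | ‖x‖ ≤ (p:ℝ)^m} = ENNReal.ofReal ((p:ℝ)^m) := by
  have hpe : (p:ℝ≥0∞) ≠ 0 := by
    simp [hp.out.ne_zero]
  have hpt : (p:ℝ≥0∞) ≠ ⊤ := ENNReal.natCast_ne_top p
  have hcast : (p:ℝ≥0∞) = ENNReal.ofReal (p:ℝ) := (ENNReal.ofReal_natCast p).symm
  induction m using Int.induction_on with
  | zero => simp only [zpow_zero]; rw [hμ, ENNReal.ofReal_one]
  | succ k ih =>
      rw [show ((k:ℤ)+1) = (k:ℤ)+1 from rfl, measure_ball_succ μ k, ih, hcast,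
        ← ENNReal.ofReal_mul (le_of_lt pR_pos)]
      congr 1
      rw [← zpow_one_add₀ (ne_of_gt pR_pos)]
      ring_nf
  | pred k ih =>
      have h2 := measure_ball_succ μ (-(k:ℤ)-1)
      rw [show (-(k:ℤ)-1+1) = -(k:ℤ) by ring] at h2
      rw [ih] at h2
      have key : (p:ℝ≥0∞) * ENNReal.ofReal ((p:ℝ)^(-(k:ℤ)-1)) = ENNReal.ofReal ((p:ℝ)^(-(k:ℤ))) := by
        rw [hcast, ← ENNReal.ofReal_mul (le_of_lt pR_pos)]
        congr 1
        rw [← zpow_one_add₀ (ne_of_gt pR_pos)]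
        ring_nf
      rw [← key] at h2
      have := (ENNReal.mul_right_inj hpe hpt).mp h2.symm
      exact this

lemma measure_ball_ne_top (hμ : μ {x : ℚ_[p] | ‖x‖ ≤ 1} = 1) (m : ℤ) :
    μ {x : ℚ_[p] | ‖x‖ ≤ (p:ℝ)^m} ≠ ⊤ := by
  rw [measure_ball μ hμ m]; exact ENNReal.ofReal_ne_top

lemma sphere_eq_diff (m : ℤ) :
    {x : ℚ_[p] | ‖x‖ = (p:ℝ)^m}
      = {x : ℚ_[p] | ‖x‖ ≤ (p:ℝ)^m} \ {x : ℚ_[p] | ‖x‖ ≤ (p:ℝ)^(m-1)} := by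
  ext x
  simp only [Set.mem_setOf_eq, Set.mem_diff, not_le]
  constructor
  · intro h
    refine ⟨le_of_eq h, ?_⟩
    rw [h]
    exact zpow_lt_zpow_right₀ pR_one_lt (by omega)
  · rintro ⟨h1, h2⟩
    exact norm_eq_of_lt_of_le h2 h1

lemma measure_sphere (hμ : μ {x : ℚ_[p] | ‖x‖ ≤ 1} = 1) (m : ℤ) :
    μ {x : ℚ_[p] | ‖x‖ = (p:ℝ)^m} = ENNReal.ofReal ((p:ℝ)^m - (p:ℝ)^(m-1)) := by
  have hsub : {x : ℚ_[p] | ‖x‖ ≤ (p:ℝ)^(m-1)} ⊆ {x : ℚ_[p] | ‖x‖ ≤ (p:ℝ)^m} :=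
    fun x hx => le_trans hx (zpow_le_zpow_right₀ (le_of_lt pR_one_lt) (by omega))
  rw [sphere_eq_diff m,
    measure_diff hsub (ball_meas _).nullMeasurableSet (measure_ball_ne_top μ hμ _),
    measure_ball μ hμ, measure_ball μ hμ,
    ENNReal.ofReal_sub _ (zpow_nonneg (le_of_lt pR_pos) _)]

lemma ball_diff_zero (n : ℤ) :
    {x : ℚ_[p] | ‖x‖ ≤ (p:ℝ)^n} \ {0} = ⋃ k : ℕ, {x : ℚ_[p] | ‖x‖ = (p:ℝ)^(n - k)} := by
  ext x
  simp only [Set.mem_diff, Set.mem_setOf_eq, Set.mem_iUnion, Set.mem_singleton_iff]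
  constructor
  · rintro ⟨h1, h2⟩
    have hv := Padic.norm_eq_zpow_neg_valuation h2
    have hle : -x.valuation ≤ n := by
      rw [hv] at h1; exact (zpow_le_zpow_iff_right₀ pR_one_lt).mp h1
    refine ⟨(n + x.valuation).toNat, ?_⟩
    rw [hv]; congr 1; omega
  · rintro ⟨k, hk⟩
    have hpos : (0:ℝ) < (p:ℝ)^((n:ℤ) - k) := zpow_pos pR_pos _
    refine ⟨?_, ?_⟩
    · rw [hk]; exact zpow_le_zpow_right₀ (le_of_lt pR_one_lt) (by omega)
    · intro h0; rw [h0, norm_zero] at hk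
      exact (ne_of_gt hpos) hk.symm

lemma sphere_disj (n : ℤ) :
    Pairwise (Function.onFun Disjoint
      (fun k : ℕ => {x : ℚ_[p] | ‖x‖ = (p:ℝ)^(n - k)})) := by
  intro k k' hkk'
  rw [Function.onFun, Set.disjoint_left]
  intro x hx hx'
  simp only [Set.mem_setOf_eq] at hx hx'
  apply hkk'
  have he : (p:ℝ)^((n:ℤ) - k) = (p:ℝ)^((n:ℤ) - k') := by rw [← hx, hx']
  have h1 : (n:ℤ) - k ≤ (n:ℤ) - k' :=
    (zpow_le_zpow_iff_right₀ pR_one_lt).mp (le_of_eq he)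
  have h2 : (n:ℤ) - k' ≤ (n:ℤ) - k :=
    (zpow_le_zpow_iff_right₀ pR_one_lt).mp (le_of_eq he.symm)
  omega

lemma measure_singleton_zero (hμ : μ {x : ℚ_[p] | ‖x‖ ≤ 1} = 1) :
    μ ({0} : Set ℚ_[p]) = 0 := by
  have hb : ∀ k : ℕ, μ ({0} : Set ℚ_[p]) ≤ ENNReal.ofReal ((p:ℝ)^(-(k:ℤ))) := by
    intro k
    rw [← measure_ball μ hμ]
    apply measure_mono
    intro x hx
    simp only [Set.mem_singleton_iff] at hx
    simp only [hx, Set.mem_setOf_eq, norm_zero]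
    exact zpow_nonneg (le_of_lt pR_pos) _
  have htr : Filter.Tendsto (fun k : ℕ => ((p:ℝ)⁻¹)^k) Filter.atTop (nhds 0) :=
    tendsto_pow_atTop_nhds_zero_of_lt_one (inv_nonneg.mpr (le_of_lt pR_pos))
      (inv_lt_one_of_one_lt₀ pR_one_lt)
  have ht : Filter.Tendsto (fun k : ℕ => ENNReal.ofReal ((p:ℝ)^(-(k:ℤ))))
      Filter.atTop (nhds 0) := by
    have : (fun k : ℕ => ENNReal.ofReal ((p:ℝ)^(-(k:ℤ))))
        = fun k : ℕ => ENNReal.ofReal (((p:ℝ)⁻¹)^k) := by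
      funext k
      rw [zpow_neg, ← inv_zpow, zpow_natCast]
    rw [this]
    simpa using ENNReal.tendsto_ofReal htr
  have hle := ge_of_tendsto' ht hb
  exact le_antisymm hle (zero_le)

end MeasureBall

end PadicLogSphereAux
theorem padic_integral_log_sphere
    (p : ℕ) [Fact p.Prime]
    [MeasurableSpace ℚ_[p]] [BorelSpace ℚ_[p]]
    (μ : Measure ℚ_[p]) [μ.IsAddHaarMeasure]
    (hμ : μ {x : ℚ_[p] | ‖x‖ ≤ 1} = 1)
    (n : ℤ) (a : ℚ_[p]) (ha : ‖a‖ = (p : ℝ) ^ n) :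
    ∫ x in {x : ℚ_[p] | ‖x‖ = (p : ℝ) ^ n}, Real.log ‖x - a‖ ∂μ
      = ((1 - 1 / (p : ℝ)) * Real.log ‖a‖ - Real.log p / ((p : ℝ) - 1)) * ‖a‖ := by
  classical
  have h1p : (1:ℝ) < p := PadicLogSphereAux.pR_one_lt
  have h0p : (0:ℝ) < p := PadicLogSphereAux.pR_pos
  have hp0 : (p:ℝ) ≠ 0 := ne_of_gt h0p
  have hlogp : 0 < Real.log p := Real.log_pos h1p
  set r : ℝ := (p:ℝ)⁻¹ with hrdef
  have hr0 : 0 ≤ r := inv_nonneg.mpr (le_of_lt h0p)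
  have hr1 : r < 1 := inv_lt_one_of_one_lt₀ h1p
  set f : ℚ_[p] → ℝ := fun y => Real.log ‖y‖ with hf
  set Bn : Set ℚ_[p] := {x | ‖x‖ ≤ (p:ℝ)^n} with hBn
  set C : Set ℚ_[p] := {y : ℚ_[p] | ‖y + a‖ ≤ (p:ℝ)^(n-1)} with hC
  set T : Set ℚ_[p] := {y : ℚ_[p] | ‖y + a‖ = (p:ℝ)^n} with hT
  set s : ℕ → Set ℚ_[p] := fun k => {x : ℚ_[p] | ‖x‖ = (p:ℝ)^((n:ℤ) - k)} with hs
  -- Step 1 : translation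
  have hemb : MeasurableEmbedding (fun y : ℚ_[p] => y + a) :=
    (MeasurableEquiv.addRight a).measurableEmbedding
  have htrans : ∫ x in {x : ℚ_[p] | ‖x‖ = (p:ℝ)^n}, Real.log ‖x - a‖ ∂μ
      = ∫ y in T, f y ∂μ := by
    have h := (measurePreserving_add_right μ a).setIntegral_preimage_emb hemb
      (fun x => Real.log ‖x - a‖) {x : ℚ_[p] | ‖x‖ = (p:ℝ)^n}
    rw [← h]
    apply setIntegral_congr_fun
    · exact (PadicLogSphereAux.sphere_meas _).preimage (measurable_add_const a)
    · intro y _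
      simp [add_sub_cancel_right, hf]
  -- Step 2 : T = Bn \ C
  have hTeq : T = Bn \ C := by
    ext y
    simp only [hT, hBn, hC, Set.mem_setOf_eq, Set.mem_diff, not_le]
    constructor
    · intro h
      constructor
      · calc ‖y‖ = ‖(y + a) + (-a)‖ := by rw [add_neg_cancel_right]
          _ ≤ max ‖y + a‖ ‖-a‖ := Padic.nonarchimedean _ _
          _ ≤ (p:ℝ)^n := by
              rw [norm_neg, ha, h]; exact le_of_eq (max_self _)
      · rw [h]; exact zpow_lt_zpow_right₀ h1p (by omega)
    · rintro ⟨h1, h2⟩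
      apply PadicLogSphereAux.norm_eq_of_lt_of_le h2
      calc ‖y + a‖ ≤ max ‖y‖ ‖a‖ := Padic.nonarchimedean _ _
        _ ≤ (p:ℝ)^n := max_le h1 (le_of_eq ha)
  have hCsub : C ⊆ Bn := by
    intro y hy
    simp only [hC, Set.mem_setOf_eq] at hy
    simp only [hBn, Set.mem_setOf_eq]
    calc ‖y‖ = ‖(y + a) + (-a)‖ := by rw [add_neg_cancel_right]
      _ ≤ max ‖y + a‖ ‖-a‖ := Padic.nonarchimedean _ _
      _ ≤ (p:ℝ)^n := by
          rw [norm_neg, ha]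
          exact max_le (le_trans hy (zpow_le_zpow_right₀ (le_of_lt h1p) (by omega))) le_rfl
  have hCmeas : MeasurableSet C := by
    have : C = (fun y : ℚ_[p] => y + a) ⁻¹' {x : ℚ_[p] | ‖x‖ ≤ (p:ℝ)^(n-1)} := rfl
    rw [this]
    exact (PadicLogSphereAux.ball_meas _).preimage (measurable_add_const a)
  have hμC : μ C = ENNReal.ofReal ((p:ℝ)^(n-1)) := by
    have hCeq : C = (fun y : ℚ_[p] => a + y) ⁻¹' {x : ℚ_[p] | ‖x‖ ≤ (p:ℝ)^(n-1)} := by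
      ext y; simp [hC, add_comm]
    rw [hCeq, measure_preimage_add, PadicLogSphereAux.measure_ball μ hμ]
  -- Step 3 : f is constant on C
  have hfC : Set.EqOn f (fun _ => ((n:ℤ):ℝ) * Real.log p) C := by
    intro y hy
    simp only [hC, Set.mem_setOf_eq] at hy
    have hlt : ‖y + a‖ < (p:ℝ)^n :=
      lt_of_le_of_lt hy (zpow_lt_zpow_right₀ h1p (by omega))
    have hya : ‖y + a‖ ≠ ‖-a‖ := by rw [norm_neg, ha]; exact ne_of_lt hlt
    have hny : ‖y‖ = (p:ℝ)^n := by
      calc ‖y‖ = ‖(y + a) + (-a)‖ := by rw [add_neg_cancel_right]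
        _ = max ‖y + a‖ ‖-a‖ := Padic.add_eq_max_of_ne hya
        _ = (p:ℝ)^n := by rw [norm_neg, ha]; exact max_eq_right (le_of_lt hlt)
    simp only [hf]
    rw [hny, Real.log_zpow]
  -- Step 4 : spheres
  have hsmeas : ∀ k : ℕ, MeasurableSet (s k) := fun k => PadicLogSphereAux.sphere_meas _
  have hsval : ∀ k : ℕ, μ (s k) = ENNReal.ofReal ((p:ℝ)^((n:ℤ)-k) - (p:ℝ)^((n:ℤ)-k-1)) :=
    fun k => PadicLogSphereAux.measure_sphere μ hμ _
  have hsub_nonneg : ∀ m : ℤ, 0 ≤ (p:ℝ)^m - (p:ℝ)^(m-1) := by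
    intro m
    have := zpow_le_zpow_right₀ (le_of_lt h1p) (show m - 1 ≤ m by omega)
    linarith
  have hsvalR : ∀ k : ℕ, (μ (s k)).toReal = (p:ℝ)^((n:ℤ)-k) - (p:ℝ)^((n:ℤ)-k-1) := by
    intro k
    rw [hsval k, ENNReal.toReal_ofReal (hsub_nonneg _)]
  have hsconst : ∀ k : ℕ, Set.EqOn f (fun _ => (((n:ℤ)-k : ℤ):ℝ) * Real.log p) (s k) := by
    intro k x hx
    simp only [hs, Set.mem_setOf_eq] at hx
    simp only [hf]
    rw [hx, Real.log_zpow]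
  have hInt : ∀ k : ℕ, IntegrableOn f (s k) μ := by
    intro k
    refine ((integrableOn_const_iff (by finiteness)).mpr (Or.inr ?_)).congr_fun (hsconst k).symm (hsmeas k)
    rw [hsval k]; exact ENNReal.ofReal_lt_top
  -- the values of the integrals on the spheres
  have hsint : ∀ k : ℕ, ∫ y in s k, f y ∂μ
      = ((p:ℝ)^((n:ℤ)-k) - (p:ℝ)^((n:ℤ)-k-1)) * ((((n:ℤ)-k : ℤ):ℝ) * Real.log p) := by
    intro k
    rw [setIntegral_congr_fun (hsmeas k) (hsconst k), setIntegral_const, measureReal_def, hsvalR k,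
      smul_eq_mul]
  -- zpow identities
  have hzpow1 : ∀ k : ℕ, (p:ℝ)^((n:ℤ)-k) = (p:ℝ)^n * r^k := by
    intro k
    rw [zpow_sub₀ hp0, zpow_natCast, div_eq_mul_inv, inv_pow]
  have hzpow2 : ∀ k : ℕ, (p:ℝ)^((n:ℤ)-k-1) = (p:ℝ)^n * r^k * r := by
    intro k
    rw [show (n:ℤ)-k-1 = ((n:ℤ)-k) + (-1) by ring, zpow_add₀ hp0, hzpow1 k, zpow_neg_one]
  -- Step 5 : integrability on Bn
  have hnormint : ∀ k : ℕ, ∫ y in s k, ‖f y‖ ∂μ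
      = ((p:ℝ)^((n:ℤ)-k) - (p:ℝ)^((n:ℤ)-k-1)) * ‖(((n:ℤ)-k : ℤ):ℝ) * Real.log p‖ := by
    intro k
    have : Set.EqOn (fun y => ‖f y‖) (fun _ => ‖(((n:ℤ)-k : ℤ):ℝ) * Real.log p‖) (s k) := by
      intro x hx; simp only; rw [hsconst k hx]
    rw [setIntegral_congr_fun (hsmeas k) this, setIntegral_const, measureReal_def, hsvalR k, smul_eq_mul]
  have hbound : ∀ k : ℕ, ∫ y in s k, ‖f y‖ ∂μ
      ≤ ((p:ℝ)^n * Real.log p) * ((|(n:ℝ)| + k) * r^k) := by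
    intro k
    rw [hnormint k]
    have h1 : (p:ℝ)^((n:ℤ)-k) - (p:ℝ)^((n:ℤ)-k-1) ≤ (p:ℝ)^n * r^k := by
      rw [hzpow1 k, hzpow2 k]
      nlinarith [mul_nonneg (zpow_nonneg (le_of_lt h0p) n) (pow_nonneg hr0 k)]
    have h2 : ‖(((n:ℤ)-k : ℤ):ℝ) * Real.log p‖ ≤ (|(n:ℝ)| + k) * Real.log p := by
      rw [norm_mul, Real.norm_eq_abs, Real.norm_eq_abs, abs_of_nonneg (le_of_lt hlogp)]
      apply mul_le_mul_of_nonneg_right _ (le_of_lt hlogp)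
      push_cast
      calc |(n:ℝ) - k| ≤ |(n:ℝ)| + |(k:ℝ)| := abs_sub _ _
        _ = |(n:ℝ)| + k := by rw [Nat.abs_cast]
    calc ((p:ℝ)^((n:ℤ)-k) - (p:ℝ)^((n:ℤ)-k-1)) * ‖(((n:ℤ)-k : ℤ):ℝ) * Real.log p‖
        ≤ ((p:ℝ)^n * r^k) * ((|(n:ℝ)| + k) * Real.log p) :=
          mul_le_mul h1 h2 (norm_nonneg _)
            (mul_nonneg (zpow_nonneg (le_of_lt h0p) n) (pow_nonneg hr0 k))
      _ = ((p:ℝ)^n * Real.log p) * ((|(n:ℝ)| + k) * r^k) := by ring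
  have hS1 : Summable (fun k : ℕ => r^k) := summable_geometric_of_lt_one hr0 hr1
  have hS2 : Summable (fun k : ℕ => (k:ℝ) * r^k) := by
    have := summable_pow_mul_geometric_of_norm_lt_one 1
      (show ‖r‖ < 1 by rw [Real.norm_eq_abs, abs_of_nonneg hr0]; exact hr1)
    simpa [pow_one] using this
  have hSbound : Summable (fun k : ℕ => ((p:ℝ)^n * Real.log p) * ((|(n:ℝ)| + k) * r^k)) := by
    apply Summable.mul_left
    have : (fun k : ℕ => (|(n:ℝ)| + k) * r^k)
        = fun k : ℕ => |(n:ℝ)| * r^k + (k:ℝ) * r^k := by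
      funext k; ring
    rw [this]
    exact (hS1.mul_left _).add hS2
  have hSnorm : Summable (fun k : ℕ => ∫ y in s k, ‖f y‖ ∂μ) := by
    apply Summable.of_nonneg_of_le _ hbound hSbound
    intro k
    exact setIntegral_nonneg (hsmeas k) (fun x _ => norm_nonneg _)
  have hIntU : IntegrableOn f (⋃ k, s k) μ :=
    integrableOn_iUnion_of_summable_integral_norm hInt hSnorm
  have hdiffeq : Bn \ {0} = ⋃ k, s k := PadicLogSphereAux.ball_diff_zero n
  have h0 : μ ({0} : Set ℚ_[p]) = 0 := PadicLogSphereAux.measure_singleton_zero μ hμ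
  have hae : (⋃ k, s k) =ᵐ[μ] Bn := by
    rw [← hdiffeq]
    apply Filter.EventuallyEq.symm
    rw [Filter.eventuallyEq_set]
    have : ∀ᵐ x ∂μ, x ∉ ({0} : Set ℚ_[p]) := by
      rw [MeasureTheory.ae_iff]
      simpa using h0
    filter_upwards [this] with x hx
    simp only [Set.mem_diff]
    tauto
  have hIntBn : IntegrableOn f Bn μ := by
    unfold IntegrableOn
    rw [← Measure.restrict_congr_set hae]
    exact hIntU
  -- Step 6 : compute ∫ over Bn
  have hBnint : ∫ y in Bn, f y ∂μ = ∑' k : ℕ, ∫ y in s k, f y ∂μ := by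
    rw [← setIntegral_congr_set hae,
      integral_iUnion hsmeas (PadicLogSphereAux.sphere_disj n) hIntU]
  -- Step 7 : tsum computation
  set L : ℝ := (p:ℝ)^n * (1 - r) * Real.log p with hL
  have hterm : ∀ k : ℕ, ∫ y in s k, f y ∂μ = (L * n) * r^k - L * ((k:ℝ) * r^k) := by
    intro k
    rw [hsint k, hzpow1 k, hzpow2 k, hL]
    push_cast
    ring
  have htsum : ∑' k : ℕ, ∫ y in s k, f y ∂μ
      = (L * n) * (1 - r)⁻¹ - L * (r / (1 - r)^2) := by
    rw [tsum_congr hterm, Summable.tsum_sub (hS1.mul_left _) (hS2.mul_left _),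
      tsum_mul_left, tsum_mul_left, tsum_geometric_of_lt_one hr0 hr1,
      tsum_coe_mul_geometric_of_norm_lt_one
        (show ‖r‖ < 1 by rw [Real.norm_eq_abs, abs_of_nonneg hr0]; exact hr1)]
  -- Step 8 : integral over C
  have hCint : ∫ y in C, f y ∂μ = (p:ℝ)^(n-1) * (((n:ℤ):ℝ) * Real.log p) := by
    rw [setIntegral_congr_fun hCmeas hfC, setIntegral_const, measureReal_def, hμC,
      ENNReal.toReal_ofReal (zpow_nonneg (le_of_lt h0p) _), smul_eq_mul]
  -- Step 9 : put everything together
  rw [htrans, hTeq, integral_diff hCmeas hIntBn hCsub, hBnint, htsum, hCint, ha,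
    Real.log_zpow]
  have hpn1 : (p:ℝ)^(n-1) = (p:ℝ)^n * r := by
    rw [zpow_sub₀ hp0, zpow_one, div_eq_mul_inv, hrdef]
  rw [hpn1, hL]
  have h1r : 1 - r ≠ 0 := by
    intro h
    have : r = 1 := by linarith
    rw [this] at hr1; exact lt_irrefl _ hr1
  have hp1 : (p:ℝ) - 1 ≠ 0 := by intro h; linarith
  have hrp : r = (p:ℝ)⁻¹ := hrdef
  rw [hrp]
  field_simp
  ring
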